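/- Define s : ℕ → ℕ by s(0)=1, s(1)=2, s(2)=4, s(3)=4, s(4)=8, s(5)=8, s(6)=8, s(7)=8, and s(n+8) = 16·s(n) for all n. If p ≥ 1, n ≥ 1, and ℝ^p admits a Clifford family J_1,…,J_n, then s(n) divides p. -/

import Mathlib

open Matrix

/-- The dimension `s(n)` of an irreducible real module over the Clifford
algebra `Cl_n` (paper's Theorem 2.3). -/
def cliffordIrredDim : ℕ → ℕ
  | 0 => 1
  | 1 => 2
  | 2 => 4
  | 3 => 4
  | 4 => 8
  | 5 => 8
  | 6 => 8
  | 7 => 8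
  | (n + 8) => 16 * cliffordIrredDim n

open Module FiniteDimensional Quaternion

section CmACm
variable {A : Type*} [Ring A]

/-- commuting elements -/
def Cm (x y : A) : Prop := x * y = y * x
/-- anticommuting elements -/
def ACm (x y : A) : Prop := x * y = -(y * x)

lemma Cm.refl (x : A) : Cm x x := rfl

lemma Cm.symm {x y : A} (h : Cm x y) : Cm y x := Eq.symm h

lemma ACm.symm {x y : A} (h : ACm x y) : ACm y x := by
  unfold ACm at *; rw [h, neg_neg]

lemma Cm.mulr {x y z : A} (h1 : Cm x y) (h2 : Cm x z) : Cm x (y * z) := by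
  unfold Cm at *
  rw [← mul_assoc, h1, mul_assoc, h2, ← mul_assoc]

lemma ACm.mulr_acm {x y z : A} (h1 : ACm x y) (h2 : ACm x z) : Cm x (y * z) := by
  unfold Cm ACm at *
  rw [← mul_assoc, h1, neg_mul, mul_assoc, h2, mul_neg, neg_neg, ← mul_assoc]

lemma ACm.mulr_cm {x y z : A} (h1 : ACm x y) (h2 : Cm x z) : ACm x (y * z) := by
  unfold Cm ACm at *
  rw [← mul_assoc, h1, neg_mul, mul_assoc, h2, ← mul_assoc]

lemma Cm.mulr_acm {x y z : A} (h1 : Cm x y) (h2 : ACm x z) : ACm x (y * z) := by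
  unfold Cm ACm at *
  rw [← mul_assoc, h1, mul_assoc, h2, mul_neg, ← mul_assoc]

lemma Cm.mull {x y z : A} (h1 : Cm x z) (h2 : Cm y z) : Cm (x * y) z :=
  ((h1.symm).mulr (h2.symm)).symm

lemma ACm.mull_acm {x y z : A} (h1 : ACm x z) (h2 : ACm y z) : Cm (x * y) z :=
  ((h1.symm).mulr_acm (h2.symm)).symm

lemma ACm.mull_cm {x y z : A} (h1 : ACm x z) (h2 : Cm y z) : ACm (x * y) z :=
  ((h1.symm).mulr_cm (h2.symm)).symm

lemma Cm.mull_acm {x y z : A} (h1 : Cm x z) (h2 : ACm y z) : ACm (x * y) z :=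
  ((h1.symm).mulr_acm (h2.symm)).symm

lemma Cm.one_left (x : A) : Cm 1 x := by unfold Cm; rw [one_mul, mul_one]

lemma Cm.negl {x y : A} (h : Cm x y) : Cm (-x) y := by
  unfold Cm at *; rw [neg_mul, h, mul_neg]

/-- square of product of two anticommuting complex structures -/
lemma sq2 {a b : A} (ha : a * a = -1) (hb : b * b = -1) (hab : ACm a b) :
    (a * b) * (a * b) = -1 := by
  have h : b * a = -(a * b) := hab.symm
  calc (a * b) * (a * b) = a * ((b * a) * b) := by simp only [mul_assoc]
    _ = a * (-(a * b) * b) := by rw [h]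
    _ = -(a * a * (b * b)) := by simp only [neg_mul, mul_neg, mul_assoc]
    _ = -1 := by rw [ha, hb]; simp

/-- square of product of two commuting complex structures is one -/
lemma sq2' {K L : A} (hK : K * K = -1) (hL : L * L = -1) (h : Cm K L) :
    (K * L) * (K * L) = 1 := by
  calc (K * L) * (K * L) = K * ((L * K) * L) := by simp only [mul_assoc]
    _ = K * ((K * L) * L) := by rw [← h]
    _ = (K * K) * (L * L) := by simp only [mul_assoc]
    _ = 1 := by rw [hK, hL]; simp

/-- square of product of four pairwise anticommuting complex structures -/
lemma sq4 {a b c d : A} (ha : a * a = -1) (hb : b * b = -1) (hc : c * c = -1)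
    (hd : d * d = -1) (hab : ACm a b) (hac : ACm a c) (had : ACm a d)
    (hbc : ACm b c) (hbd : ACm b d) (hcd : ACm c d) :
    (a * b * c * d) * (a * b * c * d) = 1 := by
  have hKL : Cm (a * b) (c * d) := (hac.mull_acm hbc).mulr (had.mull_acm hbd)
  rw [mul_assoc (a * b) c d]
  exact sq2' (sq2 ha hb hab) (sq2 hc hd hcd) hKL

/- relations of a single element with a 4-fold product, by pattern of
  (anti)commutations with the factors -/
lemma acm_quad_AAAC {x p q r s : A} (h1 : ACm x p) (h2 : ACm x q) (h3 : ACm x r)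
    (h4 : Cm x s) : ACm x (p * q * r * s) :=
  ((h1.mulr_acm h2).mulr_acm h3).mulr_cm h4

lemma acm_quad_CAAA {x p q r s : A} (h1 : Cm x p) (h2 : ACm x q) (h3 : ACm x r)
    (h4 : ACm x s) : ACm x (p * q * r * s) :=
  ((h1.mulr_acm h2).mulr_acm h3).mulr_acm h4

lemma acm_quad_ACAA {x p q r s : A} (h1 : ACm x p) (h2 : Cm x q) (h3 : ACm x r)
    (h4 : ACm x s) : ACm x (p * q * r * s) :=
  ((h1.mulr_cm h2).mulr_acm h3).mulr_acm h4

lemma acm_quad_AACA {x p q r s : A} (h1 : ACm x p) (h2 : ACm x q) (h3 : Cm x r)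
    (h4 : ACm x s) : ACm x (p * q * r * s) :=
  ((h1.mulr_acm h2).mulr h3).mulr_acm h4

lemma cm_quad_AAAA {x p q r s : A} (h1 : ACm x p) (h2 : ACm x q) (h3 : ACm x r)
    (h4 : ACm x s) : Cm x (p * q * r * s) :=
  ((h1.mulr_acm h2).mulr_acm h3).mulr_acm h4

/- relations of a 4-fold product with a single element -/
lemma cm_quadl_AACC {x p q r s : A} (h1 : ACm p x) (h2 : ACm q x) (h3 : Cm r x)
    (h4 : Cm s x) : Cm (p * q * r * s) x :=
  ((h1.mull_acm h2).mull h3).mull h4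

lemma cm_quadl_ACAC {x p q r s : A} (h1 : ACm p x) (h2 : Cm q x) (h3 : ACm r x)
    (h4 : Cm s x) : Cm (p * q * r * s) x :=
  ((h1.mull_cm h2).mull_acm h3).mull h4

lemma cm_quadl_CAAC {x p q r s : A} (h1 : Cm p x) (h2 : ACm q x) (h3 : ACm r x)
    (h4 : Cm s x) : Cm (p * q * r * s) x :=
  ((h1.mull_acm h2).mull_acm h3).mull h4

end CmACm

section Split
variable {V : Type} [AddCommGroup V] [Module ℝ V]

/-- the projection `(1+T)/2` onto the `+1` eigenspace of an involution `T` -/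
noncomputable def pe (T : Module.End ℝ V) : Module.End ℝ V := (2⁻¹ : ℝ) • (1 + T)

lemma pe_idem {T : Module.End ℝ V} (hT : T * T = 1) : pe T * pe T = pe T := by
  unfold pe
  simp only [smul_mul_assoc, mul_smul_comm, mul_add, add_mul, one_mul, mul_one, hT, smul_smul]
  match_scalars <;> norm_num

lemma pe_comm {T A : Module.End ℝ V} (h : A * T = T * A) : A * pe T = pe T * A := by
  unfold pe
  simp only [mul_smul_comm, smul_mul_assoc, mul_add, add_mul, mul_one, one_mul, h]

lemma pe_swap {T g : Module.End ℝ V} (hgT : g * T = -(T * g)) :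
    g * pe T = (1 - pe T) * g := by
  unfold pe
  simp only [mul_smul_comm, smul_mul_assoc, mul_add, add_mul, mul_one, one_mul, sub_mul, hgT]
  match_scalars <;> norm_num

lemma split [FiniteDimensional ℝ V] {T g : Module.End ℝ V} (hT : T * T = 1)
    (hg : g * g = -1) (hgT : g * T = -(T * g)) :
    finrank ℝ V = 2 * finrank ℝ (LinearMap.range (pe T)) := by
  set e := pe T with he_def
  have he : e * e = e := pe_idem hT
  have hginv : g * -g = 1 := by rw [mul_neg, hg, neg_neg]
  have hginv' : -g * g = 1 := by rw [neg_mul, hg, neg_neg]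
  let G : V ≃ₗ[ℝ] V := LinearEquiv.ofLinear g (-g)
    (by rw [← Module.End.mul_eq_comp]; exact hginv)
    (by rw [← Module.End.mul_eq_comp]; exact hginv')
  have hker : LinearMap.ker e = LinearMap.range (1 - e) := by
    ext x
    simp only [LinearMap.mem_ker, LinearMap.mem_range]
    constructor
    · intro hx
      exact ⟨x, by simp [LinearMap.sub_apply, Module.End.one_apply, hx]⟩
    · rintro ⟨y, rfl⟩
      have : e * (1 - e) = 0 := by rw [mul_sub, he, mul_one, sub_self]
      calc e ((1 - e) y) = (e * (1 - e)) y := rfl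
        _ = 0 := by rw [this]; rfl
  have hrn : finrank ℝ (LinearMap.range e) + finrank ℝ (LinearMap.range (1 - e))
      = finrank ℝ V := by
    rw [← hker]; exact LinearMap.finrank_range_add_finrank_ker e
  have hge : g * e = (1 - e) * g := pe_swap hgT
  have hmap : LinearMap.range (1 - e) = Submodule.map g (LinearMap.range e) := by
    have h1 : LinearMap.range ((1 - e) * g) = LinearMap.range (1 - e) := by
      rw [Module.End.mul_eq_comp]
      exact LinearMap.range_comp_of_range_eq_top _ (LinearMap.range_eq_top.mpr G.surjective)
    have h2 : LinearMap.range (g * e) = Submodule.map g (LinearMap.range e) := by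
      rw [Module.End.mul_eq_comp, LinearMap.range_comp]
    rw [← h1, ← hge, h2]
  have hinj : Function.Injective g := G.injective
  have heq : finrank ℝ (Submodule.map g (LinearMap.range e)) = finrank ℝ (LinearMap.range e) :=
    (LinearEquiv.finrank_eq (Submodule.equivMapOfInjective g hinj (LinearMap.range e))).symm
  rw [hmap, heq] at hrn
  omega

end Split

section Res
variable {V : Type} [AddCommGroup V] [Module ℝ V] (T : Module.End ℝ V)

lemma resT_mem {A : Module.End ℝ V} (h : Cm A T) :
    ∀ x ∈ LinearMap.range (pe T), A x ∈ LinearMap.range (pe T) := by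
  rintro x ⟨y, rfl⟩
  refine ⟨A y, ?_⟩
  have := LinearMap.congr_fun (pe_comm h) y
  simpa [Module.End.mul_apply] using this.symm

/-- restriction of an operator commuting with `T` to the range of `pe T` -/
noncomputable def resT (A : Module.End ℝ V) (h : Cm A T) :
    Module.End ℝ ↥(LinearMap.range (pe T)) :=
  A.restrict (resT_mem T h)

@[simp] lemma resT_coe (A : Module.End ℝ V) (h : Cm A T)
    (x : ↥(LinearMap.range (pe T))) : (resT T A h x : V) = A ↑x := rfl

lemma resT_congr {A B : Module.End ℝ V} {hA : Cm A T} {hB : Cm B T} (h : A = B) :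
    resT T A hA = resT T B hB := by subst h; rfl

lemma resT_mul (A B : Module.End ℝ V) (hA : Cm A T) (hB : Cm B T) :
    resT T A hA * resT T B hB = resT T (A * B) (hA.mull hB) := by
  refine LinearMap.ext fun x => Subtype.ext ?_
  simp [Module.End.mul_apply]

lemma resT_one : resT T 1 (Cm.one_left T) = 1 := by
  refine LinearMap.ext fun x => Subtype.ext ?_
  simp [Module.End.one_apply]

lemma resT_neg (A : Module.End ℝ V) (hA : Cm A T) (hA' : Cm (-A) T) :
    resT T (-A) hA' = -(resT T A hA) := by
  refine LinearMap.ext fun x => Subtype.ext ?_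
  simp

lemma cm_neg_one : Cm (-1 : Module.End ℝ V) T := by
  unfold Cm; simp

lemma resT_neg_one : resT T (-1) (cm_neg_one T) = -1 := by
  rw [resT_neg T 1 (Cm.one_left T), resT_one]

lemma Cm.resT_trans {A B : Module.End ℝ V} {hA : Cm A T} {hB : Cm B T} (h : Cm A B) :
    Cm (resT T A hA) (resT T B hB) := by
  unfold Cm
  rw [resT_mul, resT_mul]
  exact resT_congr T h

lemma ACm.resT_trans {A B : Module.End ℝ V} {hA : Cm A T} {hB : Cm B T} (h : ACm A B) :
    ACm (resT T A hA) (resT T B hB) := by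
  unfold ACm
  rw [resT_mul, resT_mul, ← resT_neg T (B * A) (hB.mull hA) ((hB.mull hA).negl)]
  exact resT_congr T h

lemma resT_sqneg {A : Module.End ℝ V} {hA : Cm A T} (h : A * A = -1) :
    resT T A hA * resT T A hA = -1 := by
  rw [resT_mul, ← resT_neg_one T]
  exact resT_congr T h

lemma resT_sqone {A : Module.End ℝ V} {hA : Cm A T} (h : A * A = 1) :
    resT T A hA * resT T A hA = 1 := by
  rw [resT_mul, ← resT_one T]
  exact resT_congr T h

end Res

lemma two_dvd_finrank {V : Type} [AddCommGroup V] [Module ℝ V] [FiniteDimensional ℝ V]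
    (a : Module.End ℝ V) (ha : a * a = -1) : 2 ∣ finrank ℝ V := by
  have h := _root_.map_mul LinearMap.det a a
  rw [ha] at h
  rw [show (-1 : Module.End ℝ V) = (-1 : ℝ) • (1 : Module.End ℝ V) by simp] at h
  rw [LinearMap.det_smul, _root_.map_one, mul_one] at h
  rcases Nat.even_or_odd (finrank ℝ V) with he | ho
  · exact he.two_dvd
  · rw [ho.neg_one_pow] at h
    nlinarith [h]

lemma four_dvd_finrank {V : Type} [AddCommGroup V] [Module ℝ V] [FiniteDimensional ℝ V]
    (a b : Module.End ℝ V) (ha : a * a = -1) (hb : b * b = -1)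
    (hab : a * b = -(b * a)) : 4 ∣ finrank ℝ V := by
  have haa : ∀ v : V, a (a v) = -v := fun v => by
    have := LinearMap.congr_fun ha v; simpa [Module.End.mul_apply] using this
  have hbb : ∀ v : V, b (b v) = -v := fun v => by
    have := LinearMap.congr_fun hb v; simpa [Module.End.mul_apply] using this
  have hba : ∀ v : V, b (a v) = -(a (b v)) := fun v => by
    have h := LinearMap.congr_fun hab v
    simp only [Module.End.mul_apply, LinearMap.neg_apply] at h
    rw [h, neg_neg]
  letI : SMul ℍ[ℝ] V :=
    ⟨fun q v => q.re • v + q.imI • a v + q.imJ • b v + q.imK • a (b v)⟩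
  have smul_def : ∀ (q : ℍ[ℝ]) (v : V),
      q • v = q.re • v + q.imI • a v + q.imJ • b v + q.imK • a (b v) := fun _ _ => rfl
  letI : MulAction ℍ[ℝ] V :=
    { one_smul := fun v => by simp [smul_def]
      mul_smul := fun q r v => by
        simp only [smul_def, _root_.map_add, _root_.map_smul, _root_.map_neg, haa, hbb, hba, smul_neg,
          Quaternion.re_mul, Quaternion.imI_mul, Quaternion.imJ_mul, Quaternion.imK_mul]
        match_scalars <;> ring }
  letI : DistribMulAction ℍ[ℝ] V :=
    { smul_zero := fun q => by simp [smul_def]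
      smul_add := fun q v w => by
        simp only [smul_def, map_add]
        match_scalars <;> ring }
  letI : Module ℍ[ℝ] V :=
    { add_smul := fun q r v => by
        simp only [smul_def, Quaternion.re_add, Quaternion.imI_add, Quaternion.imJ_add,
          Quaternion.imK_add]
        match_scalars <;> ring
      zero_smul := fun v => by simp [smul_def] }
  letI : IsScalarTower ℝ ℍ[ℝ] V :=
    ⟨fun r q v => by
      simp only [smul_def, Quaternion.re_smul, Quaternion.imI_smul, Quaternion.imJ_smul,
        Quaternion.imK_smul, smul_eq_mul]
      match_scalars <;> ring⟩
  letI : Module.Finite ℍ[ℝ] V := Module.Finite.of_restrictScalars_finite ℝ ℍ[ℝ] V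
  have key : finrank ℝ ℍ[ℝ] * finrank ℍ[ℝ] V = finrank ℝ V :=
    Module.finrank_mul_finrank ℝ ℍ[ℝ] V
  rw [Quaternion.finrank_eq_four] at key
  exact ⟨finrank ℍ[ℝ] V, key.symm⟩

lemma eight_dvd_finrank {V : Type} [AddCommGroup V] [Module ℝ V] [FiniteDimensional ℝ V]
    (a b c d : Module.End ℝ V) (ha : a * a = -1) (hb : b * b = -1) (hc : c * c = -1)
    (hd : d * d = -1) (hab : ACm a b) (hac : ACm a c) (had : ACm a d)
    (hbc : ACm b c) (hbd : ACm b d) (hcd : ACm c d) : 8 ∣ finrank ℝ V := by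
  set T := a * b * c * d with hTdef
  have hT : T * T = 1 := sq4 ha hb hc hd hab hac had hbc hbd hcd
  have haT : ACm a T := acm_quad_CAAA (Cm.refl a) hab hac had
  have hbT : ACm b T := acm_quad_ACAA hab.symm (Cm.refl b) hbc hbd
  have hcT : ACm c T := acm_quad_AACA hac.symm hbc.symm (Cm.refl c) hcd
  have hd1 : finrank ℝ V = 2 * finrank ℝ (LinearMap.range (pe T)) := split hT ha haT
  have cab : Cm (a * b) T := haT.mull_acm hbT
  have cac : Cm (a * c) T := haT.mull_acm hcT
  have h0 : ACm (a * b) (a * c) :=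
    ACm.mulr_cm (((Cm.refl a).mulr_acm hab).symm) ((hac.symm.mulr_acm hbc.symm).symm)
  have h4 := four_dvd_finrank (resT T (a * b) cab) (resT T (a * c) cac)
    (resT_sqneg T (sq2 ha hb hab)) (resT_sqneg T (sq2 ha hc hac)) (ACm.resT_trans T h0)
  obtain ⟨t, ht⟩ := h4
  exact ⟨t, by rw [hd1, ht]; ring⟩

/-- Iterated eigenspace splitting: `k` commuting involutions with suitable
swap operators, plus `m` extra operators commuting with all of them, force the
dimension to be divisible by `2^k` times whatever the extra operators force. -/
lemma multi_split (D : ℕ) {m : ℕ}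
    (hbase : ∀ (W : Type) [AddCommGroup W] [Module ℝ W] [FiniteDimensional ℝ W]
      (B : Fin m → Module.End ℝ W), (∀ l, B l * B l = -1) →
      (∀ l l', l ≠ l' → ACm (B l) (B l')) → D ∣ finrank ℝ W) :
    ∀ (k : ℕ) (V : Type) [AddCommGroup V] [Module ℝ V] [FiniteDimensional ℝ V]
      (T g : Fin k → Module.End ℝ V) (B : Fin m → Module.End ℝ V),
      (∀ i, T i * T i = 1) → (∀ i j, i ≠ j → Cm (T i) (T j)) →
      (∀ i, g i * g i = -1) → (∀ i, ACm (g i) (T i)) →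
      (∀ i j, i ≠ j → Cm (g i) (T j)) →
      (∀ l i, Cm (B l) (T i)) → (∀ l, B l * B l = -1) →
      (∀ l l', l ≠ l' → ACm (B l) (B l')) →
      2 ^ k * D ∣ finrank ℝ V := by
  intro k
  induction k with
  | zero =>
    intro V _ _ _ T g B _ _ _ _ _ _ hBsq hBanti
    simpa using hbase V B hBsq hBanti
  | succ k ihk =>
    intro V _ _ _ T g B hT hTT hg hgT hgT' hBT hBsq hBanti
    have hsplit : finrank ℝ V = 2 * finrank ℝ (LinearMap.range (pe (T 0))) :=
      split (hT 0) (hg 0) (hgT 0)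
    set T0 := T 0 with hT0def
    let T' : Fin k → Module.End ℝ ↥(LinearMap.range (pe T0)) :=
      fun i => resT T0 (T i.succ) (hTT i.succ 0 (Fin.succ_ne_zero i))
    let g' : Fin k → Module.End ℝ ↥(LinearMap.range (pe T0)) :=
      fun i => resT T0 (g i.succ) (hgT' i.succ 0 (Fin.succ_ne_zero i))
    let B' : Fin m → Module.End ℝ ↥(LinearMap.range (pe T0)) :=
      fun l => resT T0 (B l) (hBT l 0)
    have key := ihk ↥(LinearMap.range (pe T0)) T' g' B'
      (fun i => resT_sqone T0 (hT i.succ))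
      (fun i j hij => Cm.resT_trans T0 (hTT i.succ j.succ (by
        simpa [Fin.succ_inj] using hij)))
      (fun i => resT_sqneg T0 (hg i.succ))
      (fun i => ACm.resT_trans T0 (hgT i.succ))
      (fun i j hij => Cm.resT_trans T0 (hgT' i.succ j.succ (by
        simpa [Fin.succ_inj] using hij)))
      (fun l i => Cm.resT_trans T0 (hBT l i.succ))
      (fun l => resT_sqneg T0 (hBsq l))
      (fun l l' h => ACm.resT_trans T0 (hBanti l l' h))
    obtain ⟨t, ht⟩ := key
    exact ⟨t, by rw [hsplit, ht]; ring⟩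

theorem absMain : ∀ (n : ℕ) (V : Type) [AddCommGroup V] [Module ℝ V]
    [FiniteDimensional ℝ V] (J : Fin n → Module.End ℝ V),
    (∀ i, J i * J i = -1) → (∀ i j, i ≠ j → J i * J j = -(J j * J i)) →
    cliffordIrredDim n ∣ finrank ℝ V := by
  intro n
  induction n using Nat.strong_induction_on with
  | _ n ih =>
  obtain _|_|_|_|_|_|_|_|m := n <;> intro V iG iM iF J hcs hanti
  · simpa [cliffordIrredDim] using one_dvd _
  · simpa [cliffordIrredDim] using two_dvd_finrank (J 0) (hcs 0)
  · simpa [cliffordIrredDim] using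
      four_dvd_finrank (J 0) (J 1) (hcs 0) (hcs 1) (hanti 0 1 (by decide))
  · simpa [cliffordIrredDim] using
      four_dvd_finrank (J 0) (J 1) (hcs 0) (hcs 1) (hanti 0 1 (by decide))
  · simpa [cliffordIrredDim] using
      eight_dvd_finrank (J 0) (J 1) (J 2) (J 3) (hcs 0) (hcs 1) (hcs 2) (hcs 3)
        (hanti 0 1 (by decide)) (hanti 0 2 (by decide)) (hanti 0 3 (by decide))
        (hanti 1 2 (by decide)) (hanti 1 3 (by decide)) (hanti 2 3 (by decide))
  · simpa [cliffordIrredDim] using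
      eight_dvd_finrank (J 0) (J 1) (J 2) (J 3) (hcs 0) (hcs 1) (hcs 2) (hcs 3)
        (hanti 0 1 (by decide)) (hanti 0 2 (by decide)) (hanti 0 3 (by decide))
        (hanti 1 2 (by decide)) (hanti 1 3 (by decide)) (hanti 2 3 (by decide))
  · simpa [cliffordIrredDim] using
      eight_dvd_finrank (J 0) (J 1) (J 2) (J 3) (hcs 0) (hcs 1) (hcs 2) (hcs 3)
        (hanti 0 1 (by decide)) (hanti 0 2 (by decide)) (hanti 0 3 (by decide))
        (hanti 1 2 (by decide)) (hanti 1 3 (by decide)) (hanti 2 3 (by decide))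
  · simpa [cliffordIrredDim] using
      eight_dvd_finrank (J 0) (J 1) (J 2) (J 3) (hcs 0) (hcs 1) (hcs 2) (hcs 3)
        (hanti 0 1 (by decide)) (hanti 0 2 (by decide)) (hanti 0 3 (by decide))
        (hanti 1 2 (by decide)) (hanti 1 3 (by decide)) (hanti 2 3 (by decide))
  · -- the case n = m + 8 : Bott periodicity step
    have hmlt : m < m + 8 := by omega
    -- index helper
    let a : ℕ → Module.End ℝ V := fun x => J ⟨x % (m + 8), Nat.mod_lt _ (by omega)⟩
    have S : ∀ x, a x * a x = -1 := fun x => hcs _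
    have N : ∀ x y : ℕ, x < m + 8 → y < m + 8 → x ≠ y → ACm (a x) (a y) :=
      fun x y hx hy hne => hanti _ _ (by
        refine Fin.ne_of_val_ne ?_
        simpa [Nat.mod_eq_of_lt hx, Nat.mod_eq_of_lt hy] using hne)
    have N8 : ∀ x y : ℕ, x < 8 → y < 8 → x ≠ y → ACm (a x) (a y) :=
      fun x y hx hy hne => N x y (by omega) (by omega) hne
    let B : Fin m → Module.End ℝ V := fun l => a (l + 8)
    have BS : ∀ l, B l * B l = -1 := fun l => S _
    have Banti : ∀ l l', l ≠ l' → ACm (B l) (B l') := fun l l' h =>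
      N _ _ (by omega) (by omega) (by
        simp only [ne_eq, Nat.add_right_cancel_iff]
        exact fun hh => h (by exact_mod_cast Fin.val_injective (by exact_mod_cast hh)))
    have NB : ∀ (l : Fin m) (y : ℕ), y < 8 → ACm (B l) (a y) :=
      fun l y hy => N _ _ (by omega) (by omega) (by omega)
    -- the four commuting involutions
    set t1 := a 0 * a 1 * a 2 * a 3 with ht1def
    set t2 := a 0 * a 1 * a 4 * a 5 with ht2def
    set t3 := a 0 * a 2 * a 4 * a 6 with ht3def
    set t4 := a 1 * a 2 * a 4 * a 7 with ht4def
    have hsq1 : t1 * t1 = 1 := sq4 (S 0) (S 1) (S 2) (S 3)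
      (N8 0 1 (by omega) (by omega) (by omega)) (N8 0 2 (by omega) (by omega) (by omega))
      (N8 0 3 (by omega) (by omega) (by omega)) (N8 1 2 (by omega) (by omega) (by omega))
      (N8 1 3 (by omega) (by omega) (by omega)) (N8 2 3 (by omega) (by omega) (by omega))
    have hsq2 : t2 * t2 = 1 := sq4 (S 0) (S 1) (S 4) (S 5)
      (N8 0 1 (by omega) (by omega) (by omega)) (N8 0 4 (by omega) (by omega) (by omega))
      (N8 0 5 (by omega) (by omega) (by omega)) (N8 1 4 (by omega) (by omega) (by omega))
      (N8 1 5 (by omega) (by omega) (by omega)) (N8 4 5 (by omega) (by omega) (by omega))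
    have hsq3 : t3 * t3 = 1 := sq4 (S 0) (S 2) (S 4) (S 6)
      (N8 0 2 (by omega) (by omega) (by omega)) (N8 0 4 (by omega) (by omega) (by omega))
      (N8 0 6 (by omega) (by omega) (by omega)) (N8 2 4 (by omega) (by omega) (by omega))
      (N8 2 6 (by omega) (by omega) (by omega)) (N8 4 6 (by omega) (by omega) (by omega))
    have hsq4 : t4 * t4 = 1 := sq4 (S 1) (S 2) (S 4) (S 7)
      (N8 1 2 (by omega) (by omega) (by omega)) (N8 1 4 (by omega) (by omega) (by omega))
      (N8 1 7 (by omega) (by omega) (by omega)) (N8 2 4 (by omega) (by omega) (by omega))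
      (N8 2 7 (by omega) (by omega) (by omega)) (N8 4 7 (by omega) (by omega) (by omega))
    -- single generators versus the involutions
    have relx : ∀ x p q r s : ℕ, x < 8 → p < 8 → q < 8 → r < 8 → s < 8 →
        x ≠ p → x ≠ q → x ≠ r → x ≠ s → Cm (a x) (a p * a q * a r * a s) :=
      fun x p q r s hx hp hq hr hs h1 h2 h3 h4 =>
        cm_quad_AAAA (N8 x p hx hp h1) (N8 x q hx hq h2) (N8 x r hx hr h3) (N8 x s hx hs h4)
    have relxB : ∀ (l : Fin m) (p q r s : ℕ), p < 8 → q < 8 → r < 8 → s < 8 →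
        Cm (B l) (a p * a q * a r * a s) :=
      fun l p q r s hp hq hr hs =>
        cm_quad_AAAA (NB l p hp) (NB l q hq) (NB l r hr) (NB l s hs)
    -- anticommutation of the swap elements with their involutions
    have hag1 : ACm (a 3) t1 := acm_quad_AAAC
      (N8 3 0 (by omega) (by omega) (by omega)) (N8 3 1 (by omega) (by omega) (by omega))
      (N8 3 2 (by omega) (by omega) (by omega)) (Cm.refl _)
    have hag2 : ACm (a 5) t2 := acm_quad_AAAC
      (N8 5 0 (by omega) (by omega) (by omega)) (N8 5 1 (by omega) (by omega) (by omega))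
      (N8 5 4 (by omega) (by omega) (by omega)) (Cm.refl _)
    have hag3 : ACm (a 6) t3 := acm_quad_AAAC
      (N8 6 0 (by omega) (by omega) (by omega)) (N8 6 2 (by omega) (by omega) (by omega))
      (N8 6 4 (by omega) (by omega) (by omega)) (Cm.refl _)
    have hag4 : ACm (a 7) t4 := acm_quad_AAAC
      (N8 7 1 (by omega) (by omega) (by omega)) (N8 7 2 (by omega) (by omega) (by omega))
      (N8 7 4 (by omega) (by omega) (by omega)) (Cm.refl _)
    -- helpers for single vs quad with one coincidence
    have relC0 : ∀ x q r s : ℕ, x < 8 → q < 8 → r < 8 → s < 8 →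
        x ≠ q → x ≠ r → x ≠ s → ACm (a x) (a x * a q * a r * a s) :=
      fun x q r s hx hq hr hs h2 h3 h4 =>
        acm_quad_CAAA (Cm.refl _) (N8 x q hx hq h2) (N8 x r hx hr h3) (N8 x s hx hs h4)
    have relC1 : ∀ x p r s : ℕ, x < 8 → p < 8 → r < 8 → s < 8 →
        x ≠ p → x ≠ r → x ≠ s → ACm (a x) (a p * a x * a r * a s) :=
      fun x p r s hx hp hr hs h1 h3 h4 =>
        acm_quad_ACAA (N8 x p hx hp h1) (Cm.refl _) (N8 x r hx hr h3) (N8 x s hx hs h4)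
    have relC2 : ∀ x p q s : ℕ, x < 8 → p < 8 → q < 8 → s < 8 →
        x ≠ p → x ≠ q → x ≠ s → ACm (a x) (a p * a q * a x * a s) :=
      fun x p q s hx hp hq hs h1 h2 h4 =>
        acm_quad_AACA (N8 x p hx hp h1) (N8 x q hx hq h2) (Cm.refl _) (N8 x s hx hs h4)
    -- pairwise commutation of the involutions
    have c21 : Cm t2 t1 := cm_quadl_AACC
      (relC0 0 1 2 3 (by omega) (by omega) (by omega) (by omega) (by omega) (by omega) (by omega))
      (relC1 1 0 2 3 (by omega) (by omega) (by omega) (by omega) (by omega) (by omega) (by omega))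
      (relx 4 0 1 2 3 (by omega) (by omega) (by omega) (by omega) (by omega) (by omega) (by omega) (by omega) (by omega))
      (relx 5 0 1 2 3 (by omega) (by omega) (by omega) (by omega) (by omega) (by omega) (by omega) (by omega) (by omega))
    have c31 : Cm t3 t1 := cm_quadl_AACC
      (relC0 0 1 2 3 (by omega) (by omega) (by omega) (by omega) (by omega) (by omega) (by omega))
      (relC2 2 0 1 3 (by omega) (by omega) (by omega) (by omega) (by omega) (by omega) (by omega))
      (relx 4 0 1 2 3 (by omega) (by omega) (by omega) (by omega) (by omega) (by omega) (by omega) (by omega) (by omega))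
      (relx 6 0 1 2 3 (by omega) (by omega) (by omega) (by omega) (by omega) (by omega) (by omega) (by omega) (by omega))
    have c41 : Cm t4 t1 := cm_quadl_AACC
      (relC1 1 0 2 3 (by omega) (by omega) (by omega) (by omega) (by omega) (by omega) (by omega))
      (relC2 2 0 1 3 (by omega) (by omega) (by omega) (by omega) (by omega) (by omega) (by omega))
      (relx 4 0 1 2 3 (by omega) (by omega) (by omega) (by omega) (by omega) (by omega) (by omega) (by omega) (by omega))
      (relx 7 0 1 2 3 (by omega) (by omega) (by omega) (by omega) (by omega) (by omega) (by omega) (by omega) (by omega))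
    have c32 : Cm t3 t2 := cm_quadl_ACAC
      (relC0 0 1 4 5 (by omega) (by omega) (by omega) (by omega) (by omega) (by omega) (by omega))
      (relx 2 0 1 4 5 (by omega) (by omega) (by omega) (by omega) (by omega) (by omega) (by omega) (by omega) (by omega))
      (relC2 4 0 1 5 (by omega) (by omega) (by omega) (by omega) (by omega) (by omega) (by omega))
      (relx 6 0 1 4 5 (by omega) (by omega) (by omega) (by omega) (by omega) (by omega) (by omega) (by omega) (by omega))
    have c42 : Cm t4 t2 := cm_quadl_ACAC
      (relC1 1 0 4 5 (by omega) (by omega) (by omega) (by omega) (by omega) (by omega) (by omega))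
      (relx 2 0 1 4 5 (by omega) (by omega) (by omega) (by omega) (by omega) (by omega) (by omega) (by omega) (by omega))
      (relC2 4 0 1 5 (by omega) (by omega) (by omega) (by omega) (by omega) (by omega) (by omega))
      (relx 7 0 1 4 5 (by omega) (by omega) (by omega) (by omega) (by omega) (by omega) (by omega) (by omega) (by omega))
    have c43 : Cm t4 t3 := cm_quadl_CAAC
      (relx 1 0 2 4 6 (by omega) (by omega) (by omega) (by omega) (by omega) (by omega) (by omega) (by omega) (by omega))
      (relC1 2 0 4 6 (by omega) (by omega) (by omega) (by omega) (by omega) (by omega) (by omega))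
      (relC2 4 0 2 6 (by omega) (by omega) (by omega) (by omega) (by omega) (by omega) (by omega))
      (relx 7 0 2 4 6 (by omega) (by omega) (by omega) (by omega) (by omega) (by omega) (by omega) (by omega) (by omega))
    -- commutation of swap elements with the other involutions
    have w12 : Cm (a 3) t2 := relx 3 0 1 4 5 (by omega) (by omega) (by omega) (by omega) (by omega) (by omega) (by omega) (by omega) (by omega)
    have w13 : Cm (a 3) t3 := relx 3 0 2 4 6 (by omega) (by omega) (by omega) (by omega) (by omega) (by omega) (by omega) (by omega) (by omega)
    have w14 : Cm (a 3) t4 := relx 3 1 2 4 7 (by omega) (by omega) (by omega) (by omega) (by omega) (by omega) (by omega) (by omega) (by omega)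
    have w21 : Cm (a 5) t1 := relx 5 0 1 2 3 (by omega) (by omega) (by omega) (by omega) (by omega) (by omega) (by omega) (by omega) (by omega)
    have w23 : Cm (a 5) t3 := relx 5 0 2 4 6 (by omega) (by omega) (by omega) (by omega) (by omega) (by omega) (by omega) (by omega) (by omega)
    have w24 : Cm (a 5) t4 := relx 5 1 2 4 7 (by omega) (by omega) (by omega) (by omega) (by omega) (by omega) (by omega) (by omega) (by omega)
    have w31 : Cm (a 6) t1 := relx 6 0 1 2 3 (by omega) (by omega) (by omega) (by omega) (by omega) (by omega) (by omega) (by omega) (by omega)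
    have w32 : Cm (a 6) t2 := relx 6 0 1 4 5 (by omega) (by omega) (by omega) (by omega) (by omega) (by omega) (by omega) (by omega) (by omega)
    have w34 : Cm (a 6) t4 := relx 6 1 2 4 7 (by omega) (by omega) (by omega) (by omega) (by omega) (by omega) (by omega) (by omega) (by omega)
    have w41 : Cm (a 7) t1 := relx 7 0 1 2 3 (by omega) (by omega) (by omega) (by omega) (by omega) (by omega) (by omega) (by omega) (by omega)
    have w42 : Cm (a 7) t2 := relx 7 0 1 4 5 (by omega) (by omega) (by omega) (by omega) (by omega) (by omega) (by omega) (by omega) (by omega)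
    have w43 : Cm (a 7) t3 := relx 7 0 2 4 6 (by omega) (by omega) (by omega) (by omega) (by omega) (by omega) (by omega) (by omega) (by omega)
    -- assemble the families
    let Tv : Fin 4 → Module.End ℝ V := ![t1, t2, t3, t4]
    let gv : Fin 4 → Module.End ℝ V := ![a 3, a 5, a 6, a 7]
    have hbase : ∀ (W : Type) [AddCommGroup W] [Module ℝ W] [FiniteDimensional ℝ W]
        (Bf : Fin m → Module.End ℝ W), (∀ l, Bf l * Bf l = -1) →
        (∀ l l', l ≠ l' → ACm (Bf l) (Bf l')) → cliffordIrredDim m ∣ finrank ℝ W :=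
      fun W _ _ _ Bf h1 h2 => ih m hmlt W Bf h1 h2
    have big := multi_split (cliffordIrredDim m) hbase 4 V Tv gv B
      (by intro i; fin_cases i
          · exact hsq1
          · exact hsq2
          · exact hsq3
          · exact hsq4)
      (by intro i j hij
          fin_cases i <;> fin_cases j <;>
            first
              | exact (‹_ ≠ _› rfl).elim
              | exact c21.symm
              | exact c21
              | exact c31.symm
              | exact c31
              | exact c41.symm
              | exact c41
              | exact c32.symm
              | exact c32
              | exact c42.symm
              | exact c42
              | exact c43.symm
              | exact c43)
      (by intro i; fin_cases i
          · exact S 3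
          · exact S 5
          · exact S 6
          · exact S 7)
      (by intro i; fin_cases i
          · exact hag1
          · exact hag2
          · exact hag3
          · exact hag4)
      (by intro i j hij
          fin_cases i <;> fin_cases j <;>
            first
              | exact (‹_ ≠ _› rfl).elim
              | exact w12
              | exact w13
              | exact w14
              | exact w21
              | exact w23
              | exact w24
              | exact w31
              | exact w32
              | exact w34
              | exact w41
              | exact w42
              | exact w43)
      (by intro l i; fin_cases i
          · exact relxB l 0 1 2 3 (by omega) (by omega) (by omega) (by omega)
          · exact relxB l 0 1 4 5 (by omega) (by omega) (by omega) (by omega)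
          · exact relxB l 0 2 4 6 (by omega) (by omega) (by omega) (by omega)
          · exact relxB l 1 2 4 7 (by omega) (by omega) (by omega) (by omega))
      BS Banti
    show cliffordIrredDim (m + 8) ∣ finrank ℝ V
    rw [show cliffordIrredDim (m + 8) = 16 * cliffordIrredDim m from rfl]
    simpa [show (2 : ℕ) ^ 4 = 16 from rfl] using big

theorem cliffordIrredDim_dvd_of_clifford_family (p n : ℕ) (hp : 1 ≤ p) (hn : 1 ≤ n)
    (J : Fin n → Matrix (Fin p) (Fin p) ℝ)
    (hcs : ∀ i, J i * J i = -1)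
    (hanti : ∀ i j, i ≠ j → J i * J j = -(J j * J i)) :
    cliffordIrredDim n ∣ p := by
  have key := absMain n (Fin p → ℝ) (fun i => Matrix.toLinAlgEquiv' (J i))
    (fun i => by rw [← _root_.map_mul, hcs i, _root_.map_neg, _root_.map_one])
    (fun i j hij => by
      rw [← _root_.map_mul, ← _root_.map_mul, hanti i j hij, _root_.map_neg])
  simpa [Module.finrank_fin_fun] using key
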